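/- Let f : ℝⁿ → ℝ be differentiable and μ-strongly convex (μ ≥ 0) with minimizer x*. Then for every k and every choice of points x₀, …, x_k and positive weights a₀, …, a_k, the lower bound is valid: L_k ≤ f(x*), i.e., (Σ_{i=0}^k a_i f(x_i) + min_{u ∈ ℝⁿ} m_k(u))/A_k − (μ₀/(2A_k))‖x₀ − x*‖² ≤ f(x*). -/

import Mathlib

open RealInnerProductSpace Finset

/-- **Validity of the lower bound.** For a `μ`-strongly convex differentiable `f`
with minimizer `x*`, any points `x_0, …, x_k`, any positive weights, and any `μ₀ > 0`:
`(Σ a_i f(x_i) + min_u m_k(u))/A_k - (μ₀/(2 A_k)) ‖x₀ - x*‖² ≤ f x*`. -/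
theorem lower_bound_valid {n : ℕ} (f : EuclideanSpace ℝ (Fin n) → ℝ) (μ μ₀ : ℝ)
    (hμ : 0 ≤ μ) (hμ₀ : 0 < μ₀)
    (hdiff : Differentiable ℝ f)
    (hstrong : ∀ x y : EuclideanSpace ℝ (Fin n),
      f y ≥ f x + ⟪gradient f x, y - x⟫ + μ / 2 * ‖y - x‖ ^ 2)
    (xstar : EuclideanSpace ℝ (Fin n)) (hstar : ∀ x, f xstar ≤ f x)
    (a A : ℕ → ℝ) (ha : ∀ i, 0 < a i)
    (hA : ∀ i, A i = ∑ j ∈ Finset.range (i + 1), a j)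
    (x v : ℕ → EuclideanSpace ℝ (Fin n))
    (m : ℕ → EuclideanSpace ℝ (Fin n) → ℝ)
    (hm : ∀ i u, m i u = ∑ j ∈ Finset.range (i + 1),
        a j * (⟪gradient f (x j), u - x j⟫ + μ / 2 * ‖u - x j‖ ^ 2)
        + μ₀ / 2 * ‖u - x 0‖ ^ 2)
    (hv : ∀ i u, m i (v i) ≤ m i u)
    (k : ℕ) :
    (∑ i ∈ Finset.range (k + 1), a i * f (x i) + m k (v k)) / A k
      - μ₀ / (2 * A k) * ‖x 0 - xstar‖ ^ 2 ≤ f xstar := by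
  have hApos : 0 < A k := by
    rw [hA]
    exact Finset.sum_pos (fun i _ => ha i) (by simp)
  have hnorm : ‖xstar - x 0‖ = ‖x 0 - xstar‖ := norm_sub_rev _ _
  have key : ∑ i ∈ Finset.range (k + 1), a i * f (x i) + m k (v k) ≤ A k * f xstar + μ₀ / 2 * ‖x 0 - xstar‖ ^ 2 := by
    have h1 := hv k xstar
    rw [hm k xstar] at h1
    have h2 : ∑ j ∈ Finset.range (k + 1),
        a j * (⟪gradient f (x j), xstar - x j⟫ + μ / 2 * ‖xstar - x j‖ ^ 2)
        ≤ ∑ j ∈ Finset.range (k + 1), a j * (f xstar - f (x j)) := by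
      apply Finset.sum_le_sum
      intro j _
      have h3 := hstrong (x j) xstar
      nlinarith [(ha j).le]
    have h4 : ∑ j ∈ Finset.range (k + 1), a j * (f xstar - f (x j))
        = A k * f xstar - ∑ i ∈ Finset.range (k + 1), a i * f (x i) := by
      rw [hA, Finset.sum_mul, ← Finset.sum_sub_distrib]
      congr 1
      ext j
      ring
    rw [hnorm] at h1
    linarith
  have hdiv : (∑ i ∈ Finset.range (k + 1), a i * f (x i) + m k (v k)) / A k ≤ (A k * f xstar + μ₀ / 2 * ‖x 0 - xstar‖ ^ 2) / A k := by
    gcongr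
  have heq : (A k * f xstar + μ₀ / 2 * ‖x 0 - xstar‖ ^ 2) / A k = f xstar + μ₀ / (2 * A k) * ‖x 0 - xstar‖ ^ 2 := by
    field_simp
  rw [heq] at hdiv
  linarith
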